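/- Let A ∈ ℝ^{n×n} be skew-symmetric, B ∈ ℝ^{(N−n)×n} arbitrary, M = [[A, −Bᵀ],[B, 0]] ∈ ℝ^{N×N}, and E = [Iₙ; 0] ∈ ℝ^{N×n}. Then exp(M)·E = E + B′ · 𝔄([[½A, Iₙ],[¼A² − BᵀB, ½A]]) · [Iₙ; ½A], where B′ = [[½A, Iₙ],[B, 0]] ∈ ℝ^{N×2n}, [Iₙ; ½A] ∈ ℝ^{2n×n}, and 𝔄(X) = Σ_{m=0}^∞ (1/(m+1)!) Xᵐ. In particular, computing the geodesic retraction on the Stiefel manifold only requires power series of 2n×2n matrices. -/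

import Mathlib

open Matrix

theorem exp_ghor_apply_E (n m : ℕ)
    (A : Matrix (Fin n) (Fin n) ℝ) (B : Matrix (Fin m) (Fin n) ℝ) (hA : Aᵀ = -A) :
    NormedSpace.exp (Matrix.fromBlocks A (-Bᵀ) B 0) *
        Matrix.fromRows (1 : Matrix (Fin n) (Fin n) ℝ) (0 : Matrix (Fin m) (Fin n) ℝ) =
      Matrix.fromRows (1 : Matrix (Fin n) (Fin n) ℝ) (0 : Matrix (Fin m) (Fin n) ℝ) +
        (Matrix.fromBlocks ((2 : ℝ)⁻¹ • A) 1 B 0 *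
          (∑' k : ℕ, ((k + 1).factorial : ℝ)⁻¹ •
            (Matrix.fromBlocks ((2 : ℝ)⁻¹ • A) 1
              ((4 : ℝ)⁻¹ • (A * A) - Bᵀ * B) ((2 : ℝ)⁻¹ • A)) ^ k) :
            Matrix (Fin n ⊕ Fin m) (Fin n ⊕ Fin n) ℝ) *
          Matrix.fromRows (1 : Matrix (Fin n) (Fin n) ℝ) ((2 : ℝ)⁻¹ • A) := by
  letI : NormedRing (Matrix (Fin n ⊕ Fin m) (Fin n ⊕ Fin m) ℝ) := Matrix.linftyOpNormedRing
  letI : NormedAlgebra ℝ (Matrix (Fin n ⊕ Fin m) (Fin n ⊕ Fin m) ℝ) := Matrix.linftyOpNormedAlgebra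
  letI : NormedRing (Matrix (Fin n ⊕ Fin n) (Fin n ⊕ Fin n) ℝ) := Matrix.linftyOpNormedRing
  letI : NormedAlgebra ℝ (Matrix (Fin n ⊕ Fin n) (Fin n ⊕ Fin n) ℝ) := Matrix.linftyOpNormedAlgebra
  set M : Matrix (Fin n ⊕ Fin m) (Fin n ⊕ Fin m) ℝ := fromBlocks A (-Bᵀ) B 0 with hMdef
  set E : Matrix (Fin n ⊕ Fin m) (Fin n) ℝ := fromRows 1 0 with hEdef
  set B' : Matrix (Fin n ⊕ Fin m) (Fin n ⊕ Fin n) ℝ := fromBlocks ((2:ℝ)⁻¹ • A) 1 B 0 with hB'def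
  set X : Matrix (Fin n ⊕ Fin n) (Fin n ⊕ Fin n) ℝ :=
    fromBlocks ((2:ℝ)⁻¹ • A) 1 ((4:ℝ)⁻¹ • (A * A) - Bᵀ * B) ((2:ℝ)⁻¹ • A) with hXdef
  set C : Matrix (Fin n ⊕ Fin n) (Fin n) ℝ := fromRows 1 ((2:ℝ)⁻¹ • A) with hCdef
  have hcomm : M * B' = B' * X := by
    simp only [hMdef, hB'def, hXdef, fromBlocks_multiply]
    rw [fromBlocks_inj]
    refine ⟨?_, ?_, ?_, ?_⟩ <;>
      simp [Matrix.mul_smul, Matrix.smul_mul, smul_smul, sub_eq_add_neg] <;> module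
  have hMC : M * E = B' * C := by
    simp only [hMdef, hB'def, hEdef, hCdef, fromBlocks_mul_fromRows, Matrix.mul_one,
      Matrix.mul_zero, add_zero, Matrix.zero_mul, Matrix.one_mul, zero_add]
    rw [fromRows_ext_iff]
    exact ⟨by module, rfl⟩
  have hpow : ∀ k : ℕ, M ^ k * B' = B' * X ^ k := by
    intro k
    induction k with
    | zero => simp
    | succ k ih =>
      rw [pow_succ, pow_succ, Matrix.mul_assoc, hcomm, ← Matrix.mul_assoc, ih, Matrix.mul_assoc]
  have hs : Summable (fun k : ℕ => ((k.factorial : ℝ))⁻¹ • M ^ k) :=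
    NormedSpace.expSeries_summable' (𝕂 := ℝ) M
  have hg : Summable (fun k : ℕ => (((k + 1).factorial : ℝ))⁻¹ • X ^ k) := by
    refine Summable.of_norm_bounded (NormedSpace.norm_expSeries_summable' (𝕂 := ℝ) X) ?_
    intro k
    rw [norm_smul, norm_smul]
    refine mul_le_mul_of_nonneg_right ?_ (norm_nonneg _)
    simp only [norm_inv, Real.norm_natCast]
    apply inv_anti₀
    · exact_mod_cast k.factorial_pos
    · exact_mod_cast Nat.factorial_le (Nat.le_succ k)
  have hmapE' := (hs.hasSum.map (AddMonoidHom.mk' (fun P => P * E)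
      (fun x y => Matrix.add_mul x y E) : (Matrix (Fin n ⊕ Fin m) (Fin n ⊕ Fin m) ℝ) →+
        Matrix (Fin n ⊕ Fin m) (Fin n) ℝ) (continuous_id.matrix_mul continuous_const))
  simp only [AddMonoidHom.mk'_apply, Function.comp_def] at hmapE'
  have hmapE : NormedSpace.exp M * E = ∑' k : ℕ, ((k.factorial : ℝ))⁻¹ • (M ^ k * E) := by
    rw [NormedSpace.exp_eq_tsum (𝕂 := ℝ), hmapE'.tsum_eq.symm]
    exact tsum_congr fun k => by rw [Matrix.smul_mul]
  have hmapX : B' * (∑' k : ℕ, (((k + 1).factorial : ℝ))⁻¹ • X ^ k) * C =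
      ∑' k : ℕ, (((k + 1).factorial : ℝ))⁻¹ • (B' * X ^ k * C) := by
    have h2 := (hg.hasSum.map (AddMonoidHom.mk' (fun P => B' * P * C)
      (fun x y => by simp [Matrix.mul_add, Matrix.add_mul]) :
        (Matrix (Fin n ⊕ Fin n) (Fin n ⊕ Fin n) ℝ) →+ Matrix (Fin n ⊕ Fin m) (Fin n) ℝ)
      ((continuous_const.matrix_mul continuous_id).matrix_mul continuous_const))
    simp only [AddMonoidHom.mk'_apply, Function.comp_def] at h2
    rw [h2.tsum_eq.symm]
    exact tsum_congr fun k => by rw [Matrix.mul_smul, Matrix.smul_mul]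
  rw [hmapE]
  erw [hmapX]
  have hsum2 : Summable (fun k : ℕ => ((k.factorial : ℝ))⁻¹ • (M ^ k * E)) :=
    hmapE'.summable.congr fun k => by rw [Matrix.smul_mul]
  rw [Summable.tsum_eq_zero_add hsum2]
  congr 1
  · simp
  · exact tsum_congr fun k => by
      rw [pow_succ, Matrix.mul_assoc, hMC, ← Matrix.mul_assoc, hpow, Matrix.mul_assoc]
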